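/- Define I_f(x) = x - f(x)/(a_n - a_1)² where f(x) = (∑_i a_i e^{x a_i})/(∑_i e^{x a_i}) - E, with a strictly increasing and a_1 < E < a_n. Then 0 < I_f′(x) < 1 for all x ∈ ℝ. -/

import Mathlib

open Finset

theorem deriv_If_helper (n : ℕ) (a : Fin n → ℝ) (i0 iN : Fin n)
    (hlow : ∀ i, a i0 ≤ a i) (hhigh : ∀ i, a i ≤ a iN)
    (hlt : a i0 < a iN) (E x : ℝ) :
    0 < deriv (fun t : ℝ => t -
        ((∑ i, a i * Real.exp (t * a i)) / (∑ i, Real.exp (t * a i)) - E) /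
          (a iN - a i0) ^ 2) x ∧
    deriv (fun t : ℝ => t -
        ((∑ i, a i * Real.exp (t * a i)) / (∑ i, Real.exp (t * a i)) - E) /
          (a iN - a i0) ^ 2) x < 1 := by
  set D : ℝ := a iN - a i0 with hD
  have hDpos : 0 < D := sub_pos.mpr hlt
  set S0 : ℝ := ∑ i, Real.exp (x * a i) with hS0
  set S1 : ℝ := ∑ i, a i * Real.exp (x * a i) with hS1
  set S2 : ℝ := ∑ i, (a i)^2 * Real.exp (x * a i) with hS2
  have hS0pos : 0 < S0 := Finset.sum_pos (fun i _ => Real.exp_pos _) ⟨i0, Finset.mem_univ _⟩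
  have hd0 : HasDerivAt (fun t : ℝ => ∑ i, Real.exp (t * a i)) S1 x := by
    rw [hS1]
    apply HasDerivAt.fun_sum
    intro i _
    have h1 : HasDerivAt (fun t : ℝ => t * a i) (a i) x := hasDerivAt_mul_const _
    simpa [mul_comm] using h1.exp
  have hd1 : HasDerivAt (fun t : ℝ => ∑ i, a i * Real.exp (t * a i)) S2 x := by
    rw [hS2]
    apply HasDerivAt.fun_sum
    intro i _
    have h1 : HasDerivAt (fun t : ℝ => t * a i) (a i) x := hasDerivAt_mul_const _
    have h2 := (h1.exp).const_mul (a i)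
    convert h2 using 1
    rfl
    ring
  set Q : ℝ := S2 * S0 - S1 * S1 with hQ
  have hdf : HasDerivAt (fun t : ℝ => t -
      ((∑ i, a i * Real.exp (t * a i)) / (∑ i, Real.exp (t * a i)) - E) / D ^ 2)
      (1 - (Q / S0 ^ 2) / D ^ 2) x := by
    have h := ((hd1.div hd0 (ne_of_gt hS0pos)).sub_const E).div_const (D ^ 2)
    have h2 := (hasDerivAt_id x).sub h
    exact h2
  -- key identity
  have key : ∑ i, ∑ j, (a i - a j)^2 * (Real.exp (x * a i) * Real.exp (x * a j)) = 2 * Q := by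
    have inner : ∀ i : Fin n, ∑ j, (a i - a j)^2 * (Real.exp (x*a i) * Real.exp (x*a j))
        = ((a i)^2 * Real.exp (x*a i)) * S0 - (a i * Real.exp (x*a i)) * (2*S1)
          + Real.exp (x*a i) * S2 := by
      intro i
      rw [hS0, hS1, hS2]
      simp only [Finset.mul_sum, Finset.sum_mul]
      rw [← Finset.sum_sub_distrib, ← Finset.sum_add_distrib]
      refine Finset.sum_congr rfl fun j _ => ?_
      ring
    rw [Finset.sum_congr rfl fun i _ => inner i, Finset.sum_add_distrib, Finset.sum_sub_distrib,
      ← Finset.sum_mul, ← Finset.sum_mul, ← Finset.sum_mul, ← hS0, ← hS1, ← hS2, hQ]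
    ring
  have hQpos : 0 < Q := by
    have hpos : 0 < ∑ i, ∑ j, (a i - a j)^2 * (Real.exp (x * a i) * Real.exp (x * a j)) := by
      apply Finset.sum_pos'
      · intro i _
        apply Finset.sum_nonneg
        intro j _
        positivity
      · refine ⟨i0, Finset.mem_univ _, ?_⟩
        apply Finset.sum_pos'
        · intro j _; positivity
        · refine ⟨iN, Finset.mem_univ _, ?_⟩
          have hne : a i0 - a iN ≠ 0 := sub_ne_zero.mpr (ne_of_lt hlt)
          positivity
    rw [key] at hpos
    linarith
  have hQlt : Q < D^2 * S0^2 := by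
    have hub : ∑ i, ∑ j, (a i - a j)^2 * (Real.exp (x * a i) * Real.exp (x * a j))
        < ∑ i, ∑ j, D^2 * (Real.exp (x * a i) * Real.exp (x * a j)) := by
      apply Finset.sum_lt_sum
      · intro i _
        apply Finset.sum_le_sum
        intro j _
        have hb : (a i - a j)^2 ≤ D^2 := by
          have h1 := hlow i; have h2 := hhigh i; have h3 := hlow j; have h4 := hhigh j
          rw [hD]; nlinarith
        exact mul_le_mul_of_nonneg_right hb (by positivity)
      · refine ⟨i0, Finset.mem_univ _, ?_⟩
        apply Finset.sum_lt_sum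
        · intro j _
          have hb : (a i0 - a j)^2 ≤ D^2 := by
            have h1 := hlow i0; have h3 := hlow j; have h4 := hhigh j; have h5 := hhigh i0
            rw [hD]; nlinarith
          exact mul_le_mul_of_nonneg_right hb (by positivity)
        · refine ⟨i0, Finset.mem_univ _, ?_⟩
          rw [sub_self, zero_pow two_ne_zero, zero_mul]
          positivity
    have heq : ∑ i, ∑ j, D^2 * (Real.exp (x * a i) * Real.exp (x * a j)) = D^2 * S0^2 := by
      simp only [← Finset.mul_sum, ← hS0]
      rw [← Finset.sum_mul, ← hS0]
      ring
    rw [key, heq] at hub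
    nlinarith
  rw [hdf.deriv]
  constructor
  · have h1 : (Q / S0 ^ 2) / D ^ 2 < 1 := by
      rw [div_lt_one (by positivity), div_lt_iff₀ (by positivity)]
      nlinarith
    linarith
  · have h2 : 0 < (Q / S0 ^ 2) / D ^ 2 := by positivity
    linarith

theorem deriv_If_bounds (n : ℕ) (hn : 2 ≤ n) (a : Fin n → ℝ)
    (ha : StrictMono a) (E : ℝ)
    (hE1 : a ⟨0, by omega⟩ < E) (hE2 : E < a ⟨n - 1, by omega⟩) (x : ℝ) :
    0 < deriv (fun t : ℝ => t -
        ((∑ i, a i * Real.exp (t * a i)) / (∑ i, Real.exp (t * a i)) - E) /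
          (a ⟨n - 1, by omega⟩ - a ⟨0, by omega⟩) ^ 2) x ∧
    deriv (fun t : ℝ => t -
        ((∑ i, a i * Real.exp (t * a i)) / (∑ i, Real.exp (t * a i)) - E) /
          (a ⟨n - 1, by omega⟩ - a ⟨0, by omega⟩) ^ 2) x < 1 := by
  have hn0 : 0 < n := by omega
  exact deriv_If_helper n a ⟨0, by omega⟩ ⟨n - 1, by omega⟩
    (fun i => ha.monotone (by simp [Fin.le_def]))
    (fun i => ha.monotone (by simp [Fin.le_def]; omega))
    (lt_trans hE1 hE2) E x
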